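/- If h* is separable via h*(x) = g(x₀, K(x₁,...,x_ℓ)) with g strictly monotone (strictly increasing or strictly decreasing) in its second argument, then for every τ ∈ ℝ the classifier h_τ(x) := h*(0, x₁,...,x_ℓ) + τ = g(0, K(x₁,...,x_ℓ)) + τ is EL-fair with respect to h*. -/

import Mathlib

/-- If `hs` is separable with `g` strictly monotone in its second argument, then
every shifted masked classifier `x ↦ hs (0, x₁,…,x_ℓ) + τ` is EL-fair w.r.t. `hs`. -/
theorem masked_classifier_is_EL_fair {l : ℕ} (X : Set (ℝ × (Fin l → ℝ)))
    (hs : ℝ × (Fin l → ℝ) → ℝ) (g : ℝ → ℝ → ℝ) (K : (Fin l → ℝ) → ℝ)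
    (hsep : ∀ x ∈ X, hs x = g x.1 (K x.2))
    (hmono : (∀ a, StrictMono (g a)) ∨ (∀ a, StrictAnti (g a)))
    (hclosed : ∀ x ∈ X, ((0 : ℝ), x.2) ∈ X)
    (τ : ℝ) (hτ : ℝ × (Fin l → ℝ) → ℝ)
    (hτdef : ∀ x, hτ x = hs (0, x.2) + τ) :
    (∀ x1 ∈ X, ∀ x2 ∈ X, x1.2 = x2.2 → hτ x1 = hτ x2) ∧
    (∀ x1 ∈ X, ∀ x2 ∈ X, x1.1 = x2.1 →
      (hs x1 = hs x2 → hτ x1 = hτ x2) ∧ (hs x1 > hs x2 → hτ x1 ≥ hτ x2)) := by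
  constructor
  · intro x1 _ x2 _ h
    rw [hτdef, hτdef, h]
  · intro x1 hx1 x2 hx2 hfst
    have e1 : hτ x1 = g 0 (K x1.2) + τ := by
      rw [hτdef, hsep _ (hclosed _ hx1)]
    have e2 : hτ x2 = g 0 (K x2.2) + τ := by
      rw [hτdef, hsep _ (hclosed _ hx2)]
    have s1 : hs x1 = g x1.1 (K x1.2) := hsep _ hx1
    have s2 : hs x2 = g x1.1 (K x2.2) := by rw [hsep _ hx2, hfst]
    constructor
    · intro heq
      rw [s1, s2] at heq
      rcases hmono with hm | hm
      · rw [e1, e2, (hm x1.1).injective heq]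
      · rw [e1, e2, (hm x1.1).injective heq]
    · intro hgt
      rw [s1, s2] at hgt
      rcases hmono with hm | hm
      · have : K x2.2 < K x1.2 := (hm x1.1).lt_iff_lt.mp hgt
        rw [e1, e2]
        exact add_le_add_left ((hm 0).le_iff_le.mpr this.le) τ
      · have : K x1.2 < K x2.2 := (hm x1.1).lt_iff_gt.mp hgt
        rw [e1, e2]
        exact add_le_add_left ((hm 0).le_iff_ge.mpr this.le) τ
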